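/- Let T be a tree and let a, b, c_0, c_1, …, c_l be distinct leaves of T (l ≥ 1). If T contains the quartet ab|c_i c_{i+1} for every 0 ≤ i < l, then T contains the quartet ab|c_0 c_l. -/

import Mathlib

open SimpleGraph

namespace LeafPaper

/-- A leaf of a graph: a vertex with exactly one neighbor. -/
def IsLeaf {W : Type} (T : SimpleGraph W) (w : W) : Prop := ∃! u, T.Adj w u

/-- The edge list of the (unique, if `T` is a tree) path between `x` and `y`. -/
noncomputable def treePathEdges {W : Type} (T : SimpleGraph W) (x y : W) :
    List (Sym2 W) := by
  classical
  exact if h : T.Reachable x y then (Classical.choice h).bypass.edges else []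

/-- The weighted distance between `x` and `y` in a tree `T` with edge weighting `f`:
the sum of the weights of the edges on the (unique) path between `x` and `y`. -/
noncomputable def wdist {W : Type} (T : SimpleGraph W) (f : Sym2 W → ℕ) (x y : W) : ℕ :=
  ((treePathEdges T x y).map f).sum

/-- `(T, f)` is a leaf root of `G` with threshold `k`, where `ι` identifies the
vertices of `G` with the leaves of `T`. -/
def IsLeafRoot {V W : Type} (G : SimpleGraph V) (T : SimpleGraph W) (ι : V → W)
    (f : Sym2 W → ℕ) (k : ℕ) : Prop :=
  T.IsTree ∧ Function.Injective ι ∧ (∀ w : W, IsLeaf T w ↔ w ∈ Set.range ι) ∧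
    (∀ e ∈ T.edgeSet, 0 < f e) ∧
    ∀ u v : V, u ≠ v → (G.Adj u v ↔ wdist T f (ι u) (ι v) ≤ k)

/-- An unweighted tree `T` is an unweighted leaf root of `G` if some positive
integer weighting of its edges makes it a leaf root of `G`. -/
def IsUnweightedLeafRoot {V W : Type} (G : SimpleGraph V) (T : SimpleGraph W)
    (ι : V → W) : Prop :=
  ∃ (f : Sym2 W → ℕ) (k : ℕ), IsLeafRoot G T ι f k

/-- `G` is a leaf power: there are a finite tree `T` whose leaf set is exactly `V(G)`
and a positive threshold `k` such that distinct vertices are adjacent in `G` iff their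
tree distance is at most `k`. -/
def IsLeafPower {V : Type} (G : SimpleGraph V) : Prop :=
  ∃ (W : Type) (T : SimpleGraph W) (ι : V → W) (k : ℕ),
    Finite W ∧ T.IsTree ∧ Function.Injective ι ∧
      (∀ w : W, IsLeaf T w ↔ w ∈ Set.range ι) ∧ 0 < k ∧
      ∀ u v : V, u ≠ v → (G.Adj u v ↔ T.dist (ι u) (ι v) ≤ k)

/-- An alternating cycle `(x 0, y 0, x 1, y 1, …)` of `G`: `2c` distinct vertices
such that `x i y i` is an edge and `y i x (i+1)` is a non-edge (indices mod `c`). -/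
def IsAltCycle {V : Type} (G : SimpleGraph V) (c : ℕ) (x y : ZMod c → V) : Prop :=
  2 ≤ c ∧ Function.Injective (Sum.elim x y) ∧
    ∀ i : ZMod c, G.Adj (x i) (y i) ∧ ¬ G.Adj (y i) (x (i + 1))

/-- The weighted tree `(T, f)` satisfies the alternating cycle given by `x, y`
with threshold `k`. -/
def Satisfies {V W : Type} (T : SimpleGraph W) (f : Sym2 W → ℕ) (ι : V → W)
    (c : ℕ) (x y : ZMod c → V) (k : ℕ) : Prop :=
  ∀ i : ZMod c, wdist T f (ι (x i)) (ι (y i)) ≤ k ∧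
    k < wdist T f (ι (y i)) (ι (x (i + 1)))

/-- The unweighted tree `T` can satisfy the alternating cycle given by `x, y`. -/
def CanSatisfy {V W : Type} (T : SimpleGraph W) (ι : V → W) (c : ℕ)
    (x y : ZMod c → V) : Prop :=
  ∃ (f : Sym2 W → ℕ) (k : ℕ), (∀ e ∈ T.edgeSet, 0 < f e) ∧ Satisfies T f ι c x y k

/-- `T` contains the quartet `ab|cd`: the four vertices are distinct leaves of `T` and
the path between `a` and `b` is vertex-disjoint from the path between `c` and `d`. -/
def ContainsQuartet {W : Type} (T : SimpleGraph W) (a b c d : W) : Prop :=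
  IsLeaf T a ∧ IsLeaf T b ∧ IsLeaf T c ∧ IsLeaf T d ∧ a ≠ b ∧ c ≠ d ∧
    ∀ (p : T.Walk a b) (p' : T.Walk c d), p.IsPath → p'.IsPath →
      ∀ w : W, w ∈ p.support → w ∉ p'.support


/-- if a tree `T` contains the quartet `ab|cᵢc_{i+1}` for each
`0 ≤ i < l` (where `a, b, c₀, …, c_l` are distinct leaves of `T`), then `T`
contains the quartet `ab|c₀c_l`. -/
theorem stmt_8 {W : Type} [Fintype W] (T : SimpleGraph W) (hT : T.IsTree)
    (a b : W) (l : ℕ) (hl : 1 ≤ l) (c : Fin (l + 1) → W)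
    (hab : a ≠ b) (hc : Function.Injective c)
    (hca : ∀ i, c i ≠ a) (hcb : ∀ i, c i ≠ b)
    (hla : IsLeaf T a) (hlb : IsLeaf T b) (hlc : ∀ i, IsLeaf T (c i))
    (h : ∀ i : Fin l, ContainsQuartet T a b (c i.castSucc) (c i.succ)) :
    ContainsQuartet T a b (c 0) (c (Fin.last l)) := by
  classical
  -- choose a path between consecutive c's
  have seg : ∀ i : Fin l, ∃ q : T.Walk (c i.castSucc) (c i.succ), q.IsPath :=
    fun i => (hT.existsUnique_path _ _).exists
  choose P hP using seg
  -- build concatenated walk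
  have key : ∀ n : ℕ, ∀ hn : n ≤ l, ∃ q : T.Walk (c 0) (c ⟨n, Nat.lt_succ_of_le hn⟩),
      ∀ w ∈ q.support, ∃ i : Fin l, w ∈ (P i).support := by
    intro n
    induction n with
    | zero =>
      intro hn
      refine ⟨SimpleGraph.Walk.nil, ?_⟩
      intro w hw
      change w ∈ [c 0] at hw
      simp only [SimpleGraph.Walk.support_nil, List.mem_singleton] at hw
      refine ⟨⟨0, hl⟩, ?_⟩
      have : (⟨0, hl⟩ : Fin l).castSucc = (0 : Fin (l+1)) := rfl
      rw [hw]
      have := SimpleGraph.Walk.start_mem_support (P ⟨0, hl⟩)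
      simpa using this
    | succ n ih =>
      intro hn
      obtain ⟨q, hq⟩ := ih (Nat.le_of_succ_le hn)
      have e1 : c ((⟨n, hn⟩ : Fin l).castSucc) = c (⟨n, Nat.lt_succ_of_le (Nat.le_of_succ_le hn)⟩ : Fin (l+1)) := rfl
      have e2 : c ((⟨n, hn⟩ : Fin l).succ) = c (⟨n+1, Nat.lt_succ_of_le hn⟩ : Fin (l+1)) := rfl
      refine ⟨q.append (((P ⟨n, hn⟩).copy e1 e2)), ?_⟩
      intro w hw
      rw [SimpleGraph.Walk.mem_support_append_iff] at hw
      rcases hw with hw | hw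
      · exact hq w hw
      · rw [SimpleGraph.Walk.support_copy] at hw
        exact ⟨⟨n, hn⟩, hw⟩
  obtain ⟨q, hq⟩ := key l le_rfl
  refine ⟨hla, hlb, hlc 0, hlc (Fin.last l), hab, ?_, ?_⟩
  · intro hh
    have : (0 : Fin (l+1)) = Fin.last l := hc hh
    have : (0 : ℕ) = l := congrArg Fin.val this
    omega
  · intro p p' hp hp' w hwp hwp'
    -- p' is the unique path, equals q.bypass
    have huniq := hT.existsUnique_path (c 0) (c (Fin.last l))
    have heq : p' = (q.copy rfl (congrArg c (Fin.ext rfl : (⟨l, Nat.lt_succ_of_le le_rfl⟩ : Fin (l+1)) = Fin.last l))).bypass := huniq.unique hp' q.bypass_isPath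
    rw [heq] at hwp'
    have hwq : w ∈ q.support := q.support_bypass_subset hwp'
    obtain ⟨i, hi⟩ := hq w hwq
    exact (h i).2.2.2.2.2.2 p (P i) hp (hP i) w hwp hi

end LeafPaper
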